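/- Let γ(G) denote the cyclomatic number of a graph G (the minimum number of edges whose removal leaves G acyclic) and T(G) the number of connected components of G containing at least one cycle. In a cuckoo hash table with two tables of size m each storing a set of keys whose cuckoo graph is G, the minimum number of keys that must be placed in the stash equals γ(G) − T(G). -/

import Mathlib

/-- Adjacency of the cuckoo graph on the `2m` cells (two tables of `m` cells),
with one edge `(h₁ x, h₂ x)` per key `x`. -/
def cAdj (m n : ℕ) (h₁ h₂ : Fin n → Fin m) (u w : Fin m ⊕ Fin m) : Prop :=
  ∃ x : Fin n,
    (u = Sum.inl (h₁ x) ∧ w = Sum.inr (h₂ x)) ∨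
    (u = Sum.inr (h₂ x) ∧ w = Sum.inl (h₁ x))

/-- Reachability (connectivity) in the cuckoo graph. -/
def cReach (m n : ℕ) (h₁ h₂ : Fin n → Fin m) (u w : Fin m ⊕ Fin m) : Prop :=
  Relation.ReflTransGen (cAdj m n h₁ h₂) u w

/-- The number of connected components of the cuckoo graph (including
isolated vertices), as the cardinality of the quotient by connectivity. -/
noncomputable def numComponents (m n : ℕ) (h₁ h₂ : Fin n → Fin m) : ℕ :=
  Nat.card (Quot (cAdj m n h₁ h₂))

/-- The cyclomatic number `γ(G) = E - V + C` of the cuckoo graph (an integer;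
it is nonnegative). -/
noncomputable def cyclomatic (m n : ℕ) (h₁ h₂ : Fin n → Fin m) : ℤ :=
  (n : ℤ) - 2 * m + numComponents m n h₁ h₂

/-- `v`'s component contains a cycle iff it has at least as many edges (keys whose
edge lies in the component) as vertices. -/
noncomputable def cyclicAt (m n : ℕ) (h₁ h₂ : Fin n → Fin m) (v : Fin m ⊕ Fin m) : Prop :=
  ({w | cReach m n h₁ h₂ v w} : Set (Fin m ⊕ Fin m)).ncard ≤
    Nat.card {x : Fin n // cReach m n h₁ h₂ v (Sum.inl (h₁ x))}

/-- `T(G)`: the number of connected components containing at least one cycle. -/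
noncomputable def numCyclicComponents (m n : ℕ) (h₁ h₂ : Fin n → Fin m) : ℕ :=
  ({c : Quot (cAdj m n h₁ h₂) | ∃ v, Quot.mk _ v = c ∧ cyclicAt m n h₁ h₂ v}).ncard

/-- The minimum possible stash size over all valid placements: each key `x` is
placed in cell `h₁ x` of table 1, cell `h₂ x` of table 2, or the stash (`none`),
with each cell holding at most one key. -/
noncomputable def minStash (m n : ℕ) (h₁ h₂ : Fin n → Fin m) : ℕ :=
  sInf {s : ℕ | ∃ σ : Fin n → Option (Fin m ⊕ Fin m),
    (∀ x, σ x = none ∨ σ x = some (Sum.inl (h₁ x)) ∨ σ x = some (Sum.inr (h₂ x))) ∧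
    (∀ x y, σ x ≠ none → σ x = σ y → x = y) ∧
    Nat.card {x : Fin n // σ x = none} = s}

namespace CuckooAux
open Sum Relation Classical

variable (m n : ℕ) (h₁ h₂ : Fin n → Fin m)

def adjOn (K : Fin n → Prop) (u w : Fin m ⊕ Fin m) : Prop :=
  ∃ x, K x ∧
    ((u = Sum.inl (h₁ x) ∧ w = Sum.inr (h₂ x)) ∨
     (u = Sum.inr (h₂ x) ∧ w = Sum.inl (h₁ x)))

variable {m n h₁ h₂}

lemma adjOn_symm {K} : Symmetric (adjOn m n h₁ h₂ K) := by
  rintro u w ⟨x, hK, h | h⟩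
  · exact ⟨x, hK, Or.inr ⟨h.2, h.1⟩⟩
  · exact ⟨x, hK, Or.inl ⟨h.2, h.1⟩⟩

lemma adjOn_mono {K K' : Fin n → Prop} (h : ∀ x, K x → K' x) {u w}
    (ha : adjOn m n h₁ h₂ K u w) : adjOn m n h₁ h₂ K' u w := by
  obtain ⟨x, hK, hx⟩ := ha; exact ⟨x, h x hK, hx⟩

lemma cAdj_iff_adjOn {u w} : cAdj m n h₁ h₂ u w ↔ adjOn m n h₁ h₂ (fun _ => True) u w := by
  constructor
  · rintro ⟨x, hx⟩; exact ⟨x, trivial, hx⟩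
  · rintro ⟨x, _, hx⟩; exact ⟨x, hx⟩

lemma adjOn_cAdj {K} {u w} (h : adjOn m n h₁ h₂ K u w) : cAdj m n h₁ h₂ u w := by
  obtain ⟨x, _, hx⟩ := h; exact ⟨x, hx⟩

lemma cReach_of_adjOn_rtg {K} {u w}
    (h : Relation.ReflTransGen (adjOn m n h₁ h₂ K) u w) : cReach m n h₁ h₂ u w :=
  Relation.ReflTransGen.mono (fun _ _ => adjOn_cAdj) _ _ h

lemma cReach_rtg_top {u w} (h : cReach m n h₁ h₂ u w) :
    Relation.ReflTransGen (adjOn m n h₁ h₂ (fun _ => True)) u w :=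
  Relation.ReflTransGen.mono (fun _ _ ha => cAdj_iff_adjOn.mp ha) _ _ h

lemma cAdj_symm : Symmetric (cAdj m n h₁ h₂) := by
  rintro u w ⟨x, h | h⟩
  · exact ⟨x, Or.inr ⟨h.2, h.1⟩⟩
  · exact ⟨x, Or.inl ⟨h.2, h.1⟩⟩

lemma cReach_symm : Symmetric (cReach m n h₁ h₂) :=
  by haveI : Std.Symm (cAdj m n h₁ h₂) := ⟨cAdj_symm⟩; exact fun a b h => (Std.Symm.symm a b h : Relation.ReflTransGen (cAdj m n h₁ h₂) b a)

lemma mk_eq_mk {u w} :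
    Quot.mk (cAdj m n h₁ h₂) u = Quot.mk (cAdj m n h₁ h₂) w ↔ cReach m n h₁ h₂ u w := by
  rw [Quot.eq]
  constructor
  · intro h
    induction h with
    | rel a b hab => exact Relation.ReflTransGen.single hab
    | refl a => exact Relation.ReflTransGen.refl
    | symm a b _ ih => exact cReach_symm ih
    | trans a b c _ _ ih1 ih2 => exact ih1.trans ih2
  · intro h
    induction h with
    | refl => exact Relation.EqvGen.refl u
    | tail _ hab ih => exact ih.trans _ _ _ (Relation.EqvGen.rel _ _ hab)

/-! ### distance / parent machinery relative to allowed keys `K` and root `ρ` -/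

def reachN (K : Fin n → Prop) : ℕ → (Fin m ⊕ Fin m) → (Fin m ⊕ Fin m) → Prop
  | 0, u, w => u = w
  | (k+1), u, w => ∃ v, adjOn m n h₁ h₂ K u v ∧ reachN K k v w

lemma rtg_iff_reachN {K} {u w} :
    Relation.ReflTransGen (adjOn m n h₁ h₂ K) u w ↔ ∃ k, reachN (h₁ := h₁) (h₂ := h₂) K k u w := by
  constructor
  · intro h
    induction h using Relation.ReflTransGen.head_induction_on with
    | refl => exact ⟨0, rfl⟩
    | head hadj _ ih => obtain ⟨k, hk⟩ := ih; exact ⟨k + 1, _, hadj, hk⟩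
  · rintro ⟨k, hk⟩
    induction k generalizing u with
    | zero => exact hk ▸ Relation.ReflTransGen.refl
    | succ k ih =>
      obtain ⟨v, huv, hv⟩ := hk
      exact Relation.ReflTransGen.head huv (ih hv)

noncomputable def dst (K : Fin n → Prop) (ρ u : Fin m ⊕ Fin m) : ℕ :=
  if h : ∃ k, reachN (h₁ := h₁) (h₂ := h₂) K k u ρ then Nat.find h else 0

lemma dst_self {K} {ρ} : dst (h₁ := h₁) (h₂ := h₂) K ρ ρ = 0 := by
  have h : ∃ k, reachN (h₁ := h₁) (h₂ := h₂) K k ρ ρ := ⟨0, rfl⟩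
  rw [dst, dif_pos h, Nat.find_eq_zero]
  rfl

def good (K : Fin n → Prop) (ρ : Fin m ⊕ Fin m) (u : Fin m ⊕ Fin m) (x : Fin n) : Prop :=
  K x ∧
    ((u = Sum.inl (h₁ x) ∧ Relation.ReflTransGen (adjOn m n h₁ h₂ K) (Sum.inr (h₂ x)) ρ ∧
        dst (h₁ := h₁) (h₂ := h₂) K ρ (Sum.inr (h₂ x)) < dst (h₁ := h₁) (h₂ := h₂) K ρ u) ∨
     (u = Sum.inr (h₂ x) ∧ Relation.ReflTransGen (adjOn m n h₁ h₂ K) (Sum.inl (h₁ x)) ρ ∧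
        dst (h₁ := h₁) (h₂ := h₂) K ρ (Sum.inl (h₁ x)) < dst (h₁ := h₁) (h₂ := h₂) K ρ u))

lemma exists_good {K} {ρ u} (hreach : Relation.ReflTransGen (adjOn m n h₁ h₂ K) u ρ)
    (hne : u ≠ ρ) : ∃ x, good (h₁ := h₁) (h₂ := h₂) K ρ u x := by
  obtain ⟨k, hk⟩ := rtg_iff_reachN.mp hreach
  have hex : ∃ k, reachN (h₁ := h₁) (h₂ := h₂) K k u ρ := ⟨k, hk⟩
  have hdu : dst (h₁ := h₁) (h₂ := h₂) K ρ u = Nat.find hex := dif_pos hex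
  have hne0 : Nat.find hex ≠ 0 := by
    rw [Ne, Nat.find_eq_zero]; exact hne
  obtain ⟨j, hj⟩ := Nat.exists_eq_succ_of_ne_zero hne0
  have hspec : reachN (h₁ := h₁) (h₂ := h₂) K (j+1) u ρ := by
    have := Nat.find_spec hex
    rwa [hj] at this
  obtain ⟨v, huv, hv⟩ := hspec
  have hvreach : Relation.ReflTransGen (adjOn m n h₁ h₂ K) v ρ := rtg_iff_reachN.mpr ⟨j, hv⟩
  have hexv : ∃ k, reachN (h₁ := h₁) (h₂ := h₂) K k v ρ := ⟨j, hv⟩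
  have hdv : dst (h₁ := h₁) (h₂ := h₂) K ρ v ≤ j := by
    rw [dst, dif_pos hexv]; exact Nat.find_le hv
  have hlt : dst (h₁ := h₁) (h₂ := h₂) K ρ v < dst (h₁ := h₁) (h₂ := h₂) K ρ u := by
    rw [hdu, hj]; omega
  obtain ⟨x, hKx, hc | hc⟩ := huv
  · exact ⟨x, hKx, Or.inl ⟨hc.1, hc.2 ▸ hvreach, hc.2 ▸ hlt⟩⟩
  · exact ⟨x, hKx, Or.inr ⟨hc.1, hc.2 ▸ hvreach, hc.2 ▸ hlt⟩⟩

noncomputable def par (K : Fin n → Prop) (ρ u : Fin m ⊕ Fin m) : Option (Fin n) :=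
  if h : ∃ x, good (h₁ := h₁) (h₂ := h₂) K ρ u x then some (Classical.choose h) else none

lemma par_spec {K} {ρ u x} (h : par (h₁ := h₁) (h₂ := h₂) K ρ u = some x) :
    good (h₁ := h₁) (h₂ := h₂) K ρ u x := by
  rw [par] at h
  split at h
  · next he => cases h; exact Classical.choose_spec he
  · cases h

lemma par_root {K} {ρ} : par (h₁ := h₁) (h₂ := h₂) K ρ ρ = none := by
  rw [par, dif_neg]
  rintro ⟨x, -, hc | hc⟩ <;> · have := hc.2.2; rw [dst_self] at this; omega

lemma dst_pos_of_good {K ρ u x} (h : good (h₁ := h₁) (h₂ := h₂) K ρ u x) :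
    0 < dst (h₁ := h₁) (h₂ := h₂) K ρ u := by
  rcases h.2 with hc | hc <;> omega

lemma ne_root_of_par {K ρ u x} (h : par (h₁ := h₁) (h₂ := h₂) K ρ u = some x) : u ≠ ρ := by
  rintro rfl; rw [par_root] at h; cases h

lemma good_endpoint {K ρ u x} (h : good (h₁ := h₁) (h₂ := h₂) K ρ u x) :
    u = Sum.inl (h₁ x) ∨ u = Sum.inr (h₂ x) := by
  rcases h.2 with hc | hc
  · exact Or.inl hc.1
  · exact Or.inr hc.1

lemma par_inj {K ρ u u' x} (h : par (h₁ := h₁) (h₂ := h₂) K ρ u = some x)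
    (h' : par (h₁ := h₁) (h₂ := h₂) K ρ u' = some x) : u = u' := by
  have g := par_spec h
  have g' := par_spec h'
  rcases g.2 with hc | hc <;> rcases g'.2 with hc' | hc'
  · rw [hc.1, hc'.1]
  · exfalso; rw [hc.1] at hc; rw [hc'.1] at hc'; omega
  · exfalso; rw [hc.1] at hc; rw [hc'.1] at hc'; omega
  · rw [hc.1, hc'.1]

lemma reach_via_par {K} {ρ u} (h : Relation.ReflTransGen (adjOn m n h₁ h₂ K) u ρ) :
    Relation.ReflTransGen
      (adjOn m n h₁ h₂ (fun x => ∃ v, par (h₁ := h₁) (h₂ := h₂) K ρ v = some x)) u ρ := by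
  generalize hd : dst (h₁ := h₁) (h₂ := h₂) K ρ u = k
  induction k using Nat.strong_induction_on generalizing u with
  | _ k ih =>
    by_cases hne : u = ρ
    · exact hne ▸ Relation.ReflTransGen.refl
    · have hg := exists_good (h₁ := h₁) (h₂ := h₂) (hreach := h) hne
      have hpar : ∃ x, par (h₁ := h₁) (h₂ := h₂) K ρ u = some x := by
        rw [par, dif_pos hg]; exact ⟨_, rfl⟩
      obtain ⟨x, hx⟩ := hpar
      have gx := par_spec hx
      rcases gx.2 with hc | hc
      · have step : adjOn m n h₁ h₂ (fun x => ∃ v, par (h₁ := h₁) (h₂ := h₂) K ρ v = some x)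
            u (Sum.inr (h₂ x)) := ⟨x, ⟨u, hx⟩, Or.inl ⟨hc.1, rfl⟩⟩
        exact Relation.ReflTransGen.head step
          (ih _ (hd ▸ hc.2.2) hc.2.1 rfl)
      · have step : adjOn m n h₁ h₂ (fun x => ∃ v, par (h₁ := h₁) (h₂ := h₂) K ρ v = some x)
            u (Sum.inl (h₁ x)) := ⟨x, ⟨u, hx⟩, Or.inr ⟨hc.1, rfl⟩⟩
        exact Relation.ReflTransGen.head step
          (ih _ (hd ▸ hc.2.2) hc.2.1 rfl)

/-! ### components -/
open scoped Classical


variable (m n : ℕ) (h₁ h₂ : Fin n → Fin m)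

noncomputable instance : Fintype (Quot (cAdj m n h₁ h₂)) := Fintype.ofFinite _

noncomputable def Vc (c : Quot (cAdj m n h₁ h₂)) : Finset (Fin m ⊕ Fin m) :=
  Finset.univ.filter (fun u => Quot.mk (cAdj m n h₁ h₂) u = c)

noncomputable def Ec (c : Quot (cAdj m n h₁ h₂)) : Finset (Fin n) :=
  Finset.univ.filter (fun x => Quot.mk (cAdj m n h₁ h₂) (Sum.inl (h₁ x)) = c)

def cyc (c : Quot (cAdj m n h₁ h₂)) : Prop := (Vc m n h₁ h₂ c).card ≤ (Ec m n h₁ h₂ c).card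

variable {m n h₁ h₂}

lemma mem_Vc {c u} : u ∈ Vc m n h₁ h₂ c ↔ Quot.mk (cAdj m n h₁ h₂) u = c := by
  simp [Vc]

lemma mem_Ec {c x} : x ∈ Ec m n h₁ h₂ c ↔ Quot.mk (cAdj m n h₁ h₂) (Sum.inl (h₁ x)) = c := by
  simp [Ec]

lemma mk_inr_eq (x : Fin n) :
    Quot.mk (cAdj m n h₁ h₂) (Sum.inr (h₂ x)) = Quot.mk (cAdj m n h₁ h₂) (Sum.inl (h₁ x)) :=
  (Quot.sound ⟨x, Or.inl ⟨rfl, rfl⟩⟩).symm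

lemma sum_Vc_card : ∑ c, (Vc m n h₁ h₂ c).card = 2 * m := by
  have h := Finset.card_eq_sum_card_fiberwise
    (f := Quot.mk (cAdj m n h₁ h₂)) (s := Finset.univ) (t := Finset.univ)
    (fun x _ => Finset.mem_univ _)
  rw [Finset.card_univ, Fintype.card_sum, Fintype.card_fin] at h
  simp only [Vc]
  omega
  
lemma sum_Ec_card : ∑ c, (Ec m n h₁ h₂ c).card = n := by
  have h := Finset.card_eq_sum_card_fiberwise
    (f := fun x => Quot.mk (cAdj m n h₁ h₂) (Sum.inl (h₁ x))) (s := Finset.univ)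
    (t := Finset.univ) (fun x _ => Finset.mem_univ _)
  rw [Finset.card_univ, Fintype.card_fin] at h
  exact h.symm

lemma numComponents_eq :
    numComponents m n h₁ h₂ = Fintype.card (Quot (cAdj m n h₁ h₂)) :=
  Nat.card_eq_fintype_card
/-! ### bridges to the statement's definitions -/

lemma cyclicAt_iff (v : Fin m ⊕ Fin m) :
    cyclicAt m n h₁ h₂ v ↔ cyc m n h₁ h₂ (Quot.mk (cAdj m n h₁ h₂) v) := by
  have hV : ({w | cReach m n h₁ h₂ v w} : Set (Fin m ⊕ Fin m)) =
      ↑(Vc m n h₁ h₂ (Quot.mk (cAdj m n h₁ h₂) v)) := by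
    ext w
    rw [Set.mem_setOf_eq, Finset.mem_coe, mem_Vc, mk_eq_mk]
    exact ⟨fun h => cReach_symm h, fun h => cReach_symm h⟩
  have hE : Nat.card {x : Fin n // cReach m n h₁ h₂ v (Sum.inl (h₁ x))} =
      (Ec m n h₁ h₂ (Quot.mk (cAdj m n h₁ h₂) v)).card := by
    rw [Nat.card_eq_fintype_card, Fintype.card_subtype]
    congr 1
    apply Finset.filter_congr
    intro x _
    rw [mk_eq_mk]
    exact ⟨fun h => cReach_symm h, fun h => cReach_symm h⟩
  rw [cyclicAt, hV, Set.ncard_coe_finset, hE, cyc]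

lemma numCyclicComponents_eq :
    numCyclicComponents m n h₁ h₂ =
      (Finset.univ.filter (fun c => cyc m n h₁ h₂ c)).card := by
  rw [numCyclicComponents]
  have hs : {c : Quot (cAdj m n h₁ h₂) | ∃ v, Quot.mk _ v = c ∧ cyclicAt m n h₁ h₂ v} =
      ↑(Finset.univ.filter (fun c => cyc m n h₁ h₂ c)) := by
    ext c
    simp only [Set.mem_setOf_eq, Finset.coe_filter, Finset.mem_univ, true_and]
    constructor
    · rintro ⟨v, rfl, hv⟩
      exact (cyclicAt_iff v).mp hv
    · intro hc
      obtain ⟨v, hv⟩ := Quot.exists_rep c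
      exact ⟨v, hv, (cyclicAt_iff v).mpr (hv ▸ hc)⟩
  rw [hs, Set.ncard_coe_finset]

/-! ### lower bound -/

lemma stash_lower (σ : Fin n → Option (Fin m ⊕ Fin m))
    (hval : ∀ x, σ x = none ∨ σ x = some (Sum.inl (h₁ x)) ∨ σ x = some (Sum.inr (h₂ x)))
    (hinj : ∀ x y, σ x ≠ none → σ x = σ y → x = y) :
    ∑ c, ((Ec m n h₁ h₂ c).card - (Vc m n h₁ h₂ c).card) ≤
      (Finset.univ.filter (fun x => σ x = none)).card := by
  rw [Finset.card_eq_sum_card_fiberwise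
    (f := fun x => Quot.mk (cAdj m n h₁ h₂) (Sum.inl (h₁ x)))
    (s := Finset.univ.filter (fun x => σ x = none)) (t := Finset.univ)
    (fun x _ => Finset.mem_univ _)]
  apply Finset.sum_le_sum
  intro c _
  have hpart := Finset.card_filter_add_card_filter_not
    (s := Ec m n h₁ h₂ c) (p := fun x => σ x = none)
  have hP : ((Ec m n h₁ h₂ c).filter (fun x => ¬ σ x = none)).card ≤
      (Vc m n h₁ h₂ c).card := by
    apply Finset.card_le_card_of_injOn (fun x => (σ x).getD (Sum.inl (h₁ x)))
    · intro x hx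
      rw [Finset.mem_coe, Finset.mem_filter] at hx
      simp only [Finset.mem_coe]
      obtain ⟨hxe, hxn⟩ := hx
      rcases hval x with h0 | h0 | h0
      · exact absurd h0 hxn
      · rw [h0, Option.getD_some, mem_Vc]; exact mem_Ec.mp hxe
      · rw [h0, Option.getD_some, mem_Vc, mk_inr_eq]; exact mem_Ec.mp hxe
    · intro x hx y hy hxy
      simp only [Finset.coe_filter, Set.mem_setOf_eq] at hx hy
      apply hinj x y hx.2
      obtain ⟨u, hu⟩ := Option.ne_none_iff_exists'.mp hx.2
      obtain ⟨w, hw⟩ := Option.ne_none_iff_exists'.mp hy.2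
      simp only [hu, hw, Option.getD_some] at hxy ⊢
      rw [hxy]
  have hQ : (Finset.filter (fun x => Quot.mk (cAdj m n h₁ h₂) (Sum.inl (h₁ x)) = c)
      (Finset.univ.filter (fun x => σ x = none))) =
      (Ec m n h₁ h₂ c).filter (fun x => σ x = none) := by
    ext x
    simp only [Finset.mem_filter, Finset.mem_univ, true_and, mem_Ec, Ec]
    tauto
  rw [hQ]
  omega

/-! ### construction of an optimal placement -/

noncomputable def rep (c : Quot (cAdj m n h₁ h₂)) : Fin m ⊕ Fin m :=
  (Quot.exists_rep c).choose

lemma mk_rep (c : Quot (cAdj m n h₁ h₂)) : Quot.mk (cAdj m n h₁ h₂) (rep c) = c :=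
  (Quot.exists_rep c).choose_spec

lemma mk_eq_of_good {K ρ u} {x : Fin n} (h : good (h₁ := h₁) (h₂ := h₂) K ρ u x) :
    Quot.mk (cAdj m n h₁ h₂) u = Quot.mk (cAdj m n h₁ h₂) ρ := by
  rcases h.2 with hc | hc
  · rw [hc.1, ← mk_inr_eq, mk_eq_mk]
    exact cReach_of_adjOn_rtg hc.2.1
  · rw [hc.1, mk_inr_eq, mk_eq_mk]
    exact cReach_of_adjOn_rtg hc.2.1

lemma mem_Ec_of_good {K ρ u c} {x : Fin n} (h : good (h₁ := h₁) (h₂ := h₂) K ρ u x)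
    (hρ : Quot.mk (cAdj m n h₁ h₂) ρ = c) : x ∈ Ec m n h₁ h₂ c := by
  rw [mem_Ec]
  rcases good_endpoint h with he | he
  · rw [← he, mk_eq_of_good h, hρ]
  · rw [← mk_inr_eq, ← he, mk_eq_of_good h, hρ]

variable (m n h₁ h₂) in
noncomputable def pim (K : Fin n → Prop) (ρ : Fin m ⊕ Fin m) (c : Quot (cAdj m n h₁ h₂)) :
    Finset (Fin n) :=
  (Ec m n h₁ h₂ c).filter (fun x => ∃ u, par (h₁ := h₁) (h₂ := h₂) K ρ u = some x)

lemma pim_card {K : Fin n → Prop} {ρ c} (hρ : Quot.mk (cAdj m n h₁ h₂) ρ = c)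
    (hreach : ∀ u, Quot.mk (cAdj m n h₁ h₂) u = c →
      Relation.ReflTransGen (adjOn m n h₁ h₂ K) u ρ) :
    ((Vc m n h₁ h₂ c).erase ρ).card = (pim m n h₁ h₂ K ρ c).card := by
  have hpar : ∀ u ∈ (Vc m n h₁ h₂ c).erase ρ,
      ∃ x, par (h₁ := h₁) (h₂ := h₂) K ρ u = some x := by
    intro u hu
    rw [Finset.mem_erase, mem_Vc] at hu
    have hg : ∃ x, good (h₁ := h₁) (h₂ := h₂) K ρ u x :=
      exists_good (hreach u hu.2) hu.1
    rw [par, dif_pos hg]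
    exact ⟨_, rfl⟩
  apply Finset.card_bij (fun u hu => (hpar u hu).choose)
  · intro u hu
    have hspec := (hpar u hu).choose_spec
    rw [pim, Finset.mem_filter]
    exact ⟨mem_Ec_of_good (par_spec hspec) hρ, ⟨u, hspec⟩⟩
  · intro u hu u' hu' heq
    exact par_inj (hpar u hu).choose_spec (heq ▸ (hpar u' hu').choose_spec)
  · intro b hb
    rw [pim, Finset.mem_filter] at hb
    obtain ⟨hbe, u, hu⟩ := hb
    have hg := par_spec hu
    have hmem : u ∈ (Vc m n h₁ h₂ c).erase ρ := by
      rw [Finset.mem_erase, mem_Vc]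
      exact ⟨ne_root_of_par hu, (mk_eq_of_good hg).trans hρ⟩
    refine ⟨u, hmem, ?_⟩
    have hsp := (hpar u hmem).choose_spec
    have : some ((hpar u hmem).choose) = some b := hsp.symm.trans hu
    exact Option.some_inj.mp this

lemma rep_mem_Vc (c : Quot (cAdj m n h₁ h₂)) : rep c ∈ Vc m n h₁ h₂ c := by
  rw [mem_Vc]; exact mk_rep c

lemma Vc_card_pos (c : Quot (cAdj m n h₁ h₂)) : 0 < (Vc m n h₁ h₂ c).card :=
  Finset.card_pos.mpr ⟨rep c, rep_mem_Vc c⟩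

lemma reach_rep {c : Quot (cAdj m n h₁ h₂)} {u} (hu : Quot.mk (cAdj m n h₁ h₂) u = c) :
    Relation.ReflTransGen (adjOn m n h₁ h₂ (fun _ => True)) u (rep c) :=
  cReach_rtg_top (mk_eq_mk.mp (hu.trans (mk_rep c).symm))

lemma exists_compSpec (c : Quot (cAdj m n h₁ h₂)) :
    ∃ (ox : Option (Fin n)) (ρ : Fin m ⊕ Fin m),
      Quot.mk (cAdj m n h₁ h₂) ρ = c ∧
      (∀ u, Quot.mk (cAdj m n h₁ h₂) u = c →
        Relation.ReflTransGen (adjOn m n h₁ h₂ (fun x => some x ≠ ox)) u ρ) ∧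
      (∀ x, ox = some x → x ∈ Ec m n h₁ h₂ c ∧ ρ = Sum.inl (h₁ x)) ∧
      (ox.isSome ↔ cyc m n h₁ h₂ c) := by
  by_cases hcyc : cyc m n h₁ h₂ c
  · -- cyclic component: find a non-bridge edge x₀
    have hreach1 : ∀ u, Quot.mk (cAdj m n h₁ h₂) u = c →
        Relation.ReflTransGen (adjOn m n h₁ h₂ (fun _ => True)) u (rep c) :=
      fun u hu => reach_rep hu
    have hcard := pim_card (mk_rep c) hreach1
    rw [Finset.card_erase_of_mem (rep_mem_Vc c)] at hcard
    have hlt : (pim m n h₁ h₂ (fun _ => True) (rep c) c).card < (Ec m n h₁ h₂ c).card := by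
      have := Vc_card_pos c
      rw [cyc] at hcyc
      omega
    have hx0 : ∃ x₀ ∈ Ec m n h₁ h₂ c, x₀ ∉ pim m n h₁ h₂ (fun _ => True) (rep c) c := by
      by_contra hcon
      push_neg at hcon
      have hsub : Ec m n h₁ h₂ c ⊆ pim m n h₁ h₂ (fun _ => True) (rep c) c := hcon
      have := Finset.card_le_card hsub
      omega
    obtain ⟨x₀, hx₀e, hx₀p⟩ := hx0
    have hmono : ∀ u, Relation.ReflTransGen
        (adjOn m n h₁ h₂ (fun x => ∃ v,
          par (h₁ := h₁) (h₂ := h₂) (fun _ => True) (rep c) v = some x)) u (rep c) →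
        Relation.ReflTransGen (adjOn m n h₁ h₂ (fun x => some x ≠ some x₀)) u (rep c) := by
      intro u h
      refine Relation.ReflTransGen.mono (fun a b hab => adjOn_mono ?_ hab) _ _ h
      rintro x ⟨v, hv⟩ hx
      apply hx₀p
      rw [pim, Finset.mem_filter]
      have : x = x₀ := by simpa using hx
      subst this
      exact ⟨mem_Ec_of_good (par_spec hv) (mk_rep c), ⟨v, hv⟩⟩
    refine ⟨some x₀, Sum.inl (h₁ x₀), mem_Ec.mp hx₀e, ?_, ?_, by simp [hcyc]⟩
    · intro u hu
      have h1 := hmono u (reach_via_par (hreach1 u hu))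
      have h2 := hmono (Sum.inl (h₁ x₀)) (reach_via_par (hreach1 _ (mem_Ec.mp hx₀e)))
      exact h1.trans (by haveI : Std.Symm (adjOn m n h₁ h₂ (fun x => some x ≠ some x₀)) := ⟨adjOn_symm⟩; exact Std.Symm.symm _ _ h2)
    · rintro x hx
      cases hx
      exact ⟨hx₀e, rfl⟩
  · refine ⟨none, rep c, mk_rep c, ?_, by rintro x ⟨⟩, by simp [hcyc]⟩
    intro u hu
    exact Relation.ReflTransGen.mono (fun a b hab => adjOn_mono (fun x _ => by simp) hab) _ _ (reach_rep hu)

noncomputable def oxc (c : Quot (cAdj m n h₁ h₂)) : Option (Fin n) :=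
  (exists_compSpec c).choose

noncomputable def rtc (c : Quot (cAdj m n h₁ h₂)) : Fin m ⊕ Fin m :=
  (exists_compSpec c).choose_spec.choose

lemma compSpec (c : Quot (cAdj m n h₁ h₂)) :
    Quot.mk (cAdj m n h₁ h₂) (rtc c) = c ∧
      (∀ u, Quot.mk (cAdj m n h₁ h₂) u = c →
        Relation.ReflTransGen (adjOn m n h₁ h₂ (fun x => some x ≠ oxc c)) u (rtc c)) ∧
      (∀ x, oxc c = some x → x ∈ Ec m n h₁ h₂ c ∧ rtc c = Sum.inl (h₁ x)) ∧
      ((oxc c).isSome ↔ cyc m n h₁ h₂ c) :=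
  (exists_compSpec c).choose_spec.choose_spec

variable (m n h₁ h₂) in
noncomputable def parc (c : Quot (cAdj m n h₁ h₂)) (u : Fin m ⊕ Fin m) : Option (Fin n) :=
  par (h₁ := h₁) (h₂ := h₂) (fun y => some y ≠ oxc c) (rtc c) u

lemma parc_mk {c u} {x : Fin n} (h : parc m n h₁ h₂ c u = some x) :
    Quot.mk (cAdj m n h₁ h₂) u = c :=
  (mk_eq_of_good (par_spec h)).trans (compSpec c).1

lemma parc_Ec {c u} {x : Fin n} (h : parc m n h₁ h₂ c u = some x) : x ∈ Ec m n h₁ h₂ c :=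
  mem_Ec_of_good (par_spec h) (compSpec c).1

lemma parc_ne_ox {c u} {x : Fin n} (h : parc m n h₁ h₂ c u = some x) : oxc c ≠ some x :=
  fun hc => (par_spec h).1 hc.symm

lemma parc_root (c : Quot (cAdj m n h₁ h₂)) : parc m n h₁ h₂ c (rtc c) = none := par_root

variable (m n h₁ h₂) in
noncomputable def sig (x : Fin n) : Option (Fin m ⊕ Fin m) :=
  if oxc (Quot.mk (cAdj m n h₁ h₂) (Sum.inl (h₁ x))) = some x then some (Sum.inl (h₁ x))
  else if h : ∃ u, parc m n h₁ h₂ (Quot.mk (cAdj m n h₁ h₂) (Sum.inl (h₁ x))) u = some x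
    then some h.choose else none

lemma sig_val (x : Fin n) : sig m n h₁ h₂ x = none ∨ sig m n h₁ h₂ x = some (Sum.inl (h₁ x)) ∨
    sig m n h₁ h₂ x = some (Sum.inr (h₂ x)) := by
  rw [sig]
  split
  · exact Or.inr (Or.inl rfl)
  · split
    · next h =>
      rcases good_endpoint (par_spec h.choose_spec) with he | he
      · exact Or.inr (Or.inl (by rw [he]))
      · exact Or.inr (Or.inr (by rw [he]))
    · exact Or.inl rfl

lemma sig_inj : ∀ x y, sig m n h₁ h₂ x ≠ none → sig m n h₁ h₂ x = sig m n h₁ h₂ y → x = y := by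
  intro x y hxne hxy
  rw [sig] at hxne
  rw [show sig m n h₁ h₂ x = _ from rfl, sig] at hxy
  rw [sig] at hxy
  by_cases hox : oxc (Quot.mk (cAdj m n h₁ h₂) (Sum.inl (h₁ x))) = some x
  · rw [if_pos hox] at hxy
    by_cases hoy : oxc (Quot.mk (cAdj m n h₁ h₂) (Sum.inl (h₁ y))) = some y
    · rw [if_pos hoy] at hxy
      have h1 : h₁ x = h₁ y := Sum.inl.inj (Option.some_inj.mp hxy)
      have h2 : Quot.mk (cAdj m n h₁ h₂) (Sum.inl (h₁ x)) =
          Quot.mk (cAdj m n h₁ h₂) (Sum.inl (h₁ y)) := by rw [h1]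
      rw [h2, hoy] at hox
      exact (Option.some_inj.mp hox).symm
    · rw [if_neg hoy] at hxy
      split at hxy
      · next hey =>
        exfalso
        have hpy := hey.choose_spec
        have hu : hey.choose = Sum.inl (h₁ x) := (Option.some_inj.mp hxy).symm
        have hcc : Quot.mk (cAdj m n h₁ h₂) (Sum.inl (h₁ x)) =
            Quot.mk (cAdj m n h₁ h₂) (Sum.inl (h₁ y)) := by
          rw [← hu]; exact parc_mk hpy
        have hrt : rtc (Quot.mk (cAdj m n h₁ h₂) (Sum.inl (h₁ x))) = Sum.inl (h₁ x) :=
          ((compSpec _).2.2.1 x hox).2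
        rw [hu, ← hrt, hcc] at hpy
        rw [parc_root] at hpy
        cases hpy
      · cases hxy
  · rw [if_neg hox] at hxne hxy
    split at hxy <;> rename_i hex
    ·
      have hpx := hex.choose_spec
      by_cases hoy : oxc (Quot.mk (cAdj m n h₁ h₂) (Sum.inl (h₁ y))) = some y
      · rw [if_pos hoy] at hxy
        exfalso
        have hu : hex.choose = Sum.inl (h₁ y) := Option.some_inj.mp hxy
        have hcc : Quot.mk (cAdj m n h₁ h₂) (Sum.inl (h₁ y)) =
            Quot.mk (cAdj m n h₁ h₂) (Sum.inl (h₁ x)) := by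
          rw [← hu]; exact parc_mk hpx
        have hrt : rtc (Quot.mk (cAdj m n h₁ h₂) (Sum.inl (h₁ y))) = Sum.inl (h₁ y) :=
          ((compSpec _).2.2.1 y hoy).2
        rw [hu, ← hrt, ← hcc] at hpx
        rw [parc_root] at hpx
        cases hpx
      · rw [if_neg hoy] at hxy
        split at hxy
        · next hey =>
          have hpy := hey.choose_spec
          have hu : hex.choose = hey.choose := Option.some_inj.mp hxy
          have hcc : Quot.mk (cAdj m n h₁ h₂) (Sum.inl (h₁ x)) =
              Quot.mk (cAdj m n h₁ h₂) (Sum.inl (h₁ y)) :=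
            (parc_mk hpx).symm.trans (hu ▸ parc_mk hpy)
          have hpx' : parc m n h₁ h₂ (Quot.mk (cAdj m n h₁ h₂) (Sum.inl (h₁ y)))
              hey.choose = some x := by rw [← hu, ← hcc]; exact hpx
          exact Option.some_inj.mp (hpx'.symm.trans hpy)
        · cases hxy
    · rw [dif_neg hex] at hxne
      exact absurd rfl hxne

lemma rtc_mem_Vc (c : Quot (cAdj m n h₁ h₂)) : rtc c ∈ Vc m n h₁ h₂ c :=
  mem_Vc.mpr (compSpec c).1

lemma pimc_card (c : Quot (cAdj m n h₁ h₂)) :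
    (pim m n h₁ h₂ (fun y => some y ≠ oxc c) (rtc c) c).card = (Vc m n h₁ h₂ c).card - 1 := by
  have h := pim_card (compSpec c).1 (compSpec c).2.1
  rw [Finset.card_erase_of_mem (rtc_mem_Vc c)] at h
  omega

lemma vc_le_ec_succ (c : Quot (cAdj m n h₁ h₂)) :
    (Vc m n h₁ h₂ c).card ≤ (Ec m n h₁ h₂ c).card + 1 := by
  have h := pimc_card c
  have hsub : pim m n h₁ h₂ (fun y => some y ≠ oxc c) (rtc c) c ⊆ Ec m n h₁ h₂ c :=
    Finset.filter_subset _ _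
  have h2 := Finset.card_le_card hsub
  have h3 := Vc_card_pos c
  omega

lemma ox_filter_card (c : Quot (cAdj m n h₁ h₂)) :
    ((Ec m n h₁ h₂ c).filter (fun x => oxc c = some x)).card =
      (if cyc m n h₁ h₂ c then 1 else 0) := by
  rcases hox : oxc c with _ | x₀
  · have hnc : ¬ cyc m n h₁ h₂ c := by
      rw [← (compSpec c).2.2.2, hox]; simp
    rw [if_neg hnc]
    rw [Finset.card_eq_zero]
    ext z
    simp [hox]
  · have hc : cyc m n h₁ h₂ c := by
      rw [← (compSpec c).2.2.2, hox]; simp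
    rw [if_pos hc]
    have hx₀ : x₀ ∈ Ec m n h₁ h₂ c := ((compSpec c).2.2.1 x₀ hox).1
    have hset : (Ec m n h₁ h₂ c).filter (fun x => some x₀ = some x) = {x₀} := by
      ext z
      simp only [Finset.mem_filter, Finset.mem_singleton, Option.some_inj]
      constructor
      · rintro ⟨_, hz⟩; exact hz.symm
      · rintro rfl; exact ⟨hx₀, rfl⟩
    rw [hset, Finset.card_singleton]

lemma sig_stash_card :
    (Finset.univ.filter (fun x => sig m n h₁ h₂ x = none)).card =
      ∑ c, ((Ec m n h₁ h₂ c).card - (Vc m n h₁ h₂ c).card) := by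
  rw [Finset.card_eq_sum_card_fiberwise
    (f := fun x => Quot.mk (cAdj m n h₁ h₂) (Sum.inl (h₁ x)))
    (s := Finset.univ.filter (fun x => sig m n h₁ h₂ x = none)) (t := Finset.univ)
    (fun x _ => Finset.mem_univ _)]
  apply Finset.sum_congr rfl
  intro c _
  have hQ : (Finset.filter (fun x => Quot.mk (cAdj m n h₁ h₂) (Sum.inl (h₁ x)) = c)
      (Finset.univ.filter (fun x => sig m n h₁ h₂ x = none))) =
      (Ec m n h₁ h₂ c).filter (fun x => sig m n h₁ h₂ x = none) := by
    ext x
    simp only [Finset.mem_filter, Finset.mem_univ, true_and, Ec]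
    tauto
  rw [hQ]
  have hpart := Finset.card_filter_add_card_filter_not
    (s := Ec m n h₁ h₂ c) (p := fun x => sig m n h₁ h₂ x = none)
  -- placed keys in component c
  have hplaced : (Ec m n h₁ h₂ c).filter (fun x => ¬ sig m n h₁ h₂ x = none) =
      ((Ec m n h₁ h₂ c).filter (fun x => oxc c = some x)) ∪
        (pim m n h₁ h₂ (fun y => some y ≠ oxc c) (rtc c) c) := by
    ext x
    rw [pim]
    simp only [Finset.mem_union, Finset.mem_filter]
    constructor
    · rintro ⟨hxe, hxn⟩
      rw [sig] at hxn
      rw [mem_Ec.mp hxe] at hxn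
      by_cases hox : oxc c = some x
      · exact Or.inl ⟨hxe, hox⟩
      · rw [if_neg hox] at hxn
        right
        refine ⟨hxe, ?_⟩
        by_contra hno
        rw [dif_neg ?_] at hxn
        · exact hxn rfl
        · intro hcon
          exact hno (by simpa only [parc] using hcon)
    · intro hx
      have hxe : x ∈ Ec m n h₁ h₂ c := by
        rcases hx with h | h
        · exact h.1
        · exact h.1
      refine ⟨hxe, ?_⟩
      rw [sig, mem_Ec.mp hxe]
      rcases hx with h | h
      · rw [if_pos h.2]; simp
      · by_cases hox : oxc c = some x
        · rw [if_pos hox]; simp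
        · rw [if_neg hox]
          rw [dif_pos ?_]
          · simp
          · simpa only [parc] using h.2
  have hdisj : Disjoint ((Ec m n h₁ h₂ c).filter (fun x => oxc c = some x))
      (pim m n h₁ h₂ (fun y => some y ≠ oxc c) (rtc c) c) := by
    rw [Finset.disjoint_left]
    intro a ha hb
    rw [Finset.mem_filter] at ha
    rw [pim, Finset.mem_filter] at hb
    obtain ⟨u, hu⟩ := hb.2
    exact parc_ne_ox (c := c) (by simpa only [parc] using hu) ha.2
  have hcard : ((Ec m n h₁ h₂ c).filter (fun x => ¬ sig m n h₁ h₂ x = none)).card =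
      (if cyc m n h₁ h₂ c then 1 else 0) + ((Vc m n h₁ h₂ c).card - 1) := by
    rw [hplaced, Finset.card_union_of_disjoint hdisj, ox_filter_card, pimc_card]
  have hsub := Finset.card_le_card
    (Finset.filter_subset (fun x => ¬ sig m n h₁ h₂ x = none) (Ec m n h₁ h₂ c))
  have hpos := Vc_card_pos c
  by_cases hc : cyc m n h₁ h₂ c
  · rw [if_pos hc] at hcard
    rw [cyc] at hc
    omega
  · rw [if_neg hc] at hcard
    rw [cyc, not_le] at hc
    omega

lemma natCard_none_eq (σ : Fin n → Option (Fin m ⊕ Fin m)) :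
    Nat.card {x : Fin n // σ x = none} = (Finset.univ.filter (fun x => σ x = none)).card := by
  rw [Nat.card_eq_fintype_card, Fintype.card_subtype]

lemma minStash_eq :
    minStash m n h₁ h₂ = ∑ c, ((Ec m n h₁ h₂ c).card - (Vc m n h₁ h₂ c).card) := by
  have hmem : (∑ c, ((Ec m n h₁ h₂ c).card - (Vc m n h₁ h₂ c).card)) ∈
      {s : ℕ | ∃ σ : Fin n → Option (Fin m ⊕ Fin m),
        (∀ x, σ x = none ∨ σ x = some (Sum.inl (h₁ x)) ∨ σ x = some (Sum.inr (h₂ x))) ∧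
        (∀ x y, σ x ≠ none → σ x = σ y → x = y) ∧
        Nat.card {x : Fin n // σ x = none} = s} := by
    refine ⟨sig m n h₁ h₂, sig_val, sig_inj, ?_⟩
    rw [natCard_none_eq]
    exact sig_stash_card
  apply le_antisymm
  · exact Nat.sInf_le hmem
  · apply le_csInf ⟨_, hmem⟩
    rintro s ⟨σ, hval, hinj, hcount⟩
    rw [← hcount, natCard_none_eq]
    exact stash_lower σ hval hinj

lemma final_arith :
    ((∑ c, ((Ec m n h₁ h₂ c).card - (Vc m n h₁ h₂ c).card) : ℕ) : ℤ) =
      (n : ℤ) - 2 * m + Fintype.card (Quot (cAdj m n h₁ h₂)) -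
        (Finset.univ.filter (fun c => cyc m n h₁ h₂ c)).card := by
  have hterm : ∀ c ∈ (Finset.univ : Finset (Quot (cAdj m n h₁ h₂))),
      (((Ec m n h₁ h₂ c).card - (Vc m n h₁ h₂ c).card : ℕ) : ℤ) =
        ((Ec m n h₁ h₂ c).card : ℤ) - ((Vc m n h₁ h₂ c).card : ℤ) + 1 -
          (if cyc m n h₁ h₂ c then 1 else 0) := by
    intro c _
    have h1 := vc_le_ec_succ c
    have h2 := Vc_card_pos c
    by_cases hc : cyc m n h₁ h₂ c
    · rw [if_pos hc]
      rw [cyc] at hc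
      rw [Nat.cast_sub hc]
      ring
    · rw [if_neg hc]
      rw [cyc, not_le] at hc
      have h3 : (Ec m n h₁ h₂ c).card - (Vc m n h₁ h₂ c).card = 0 :=
        Nat.sub_eq_zero_of_le (le_of_lt hc)
      have h4 : (Vc m n h₁ h₂ c).card = (Ec m n h₁ h₂ c).card + 1 := by omega
      rw [h3, h4]
      push_cast
      ring
  rw [Nat.cast_sum, Finset.sum_congr rfl hterm]
  rw [Finset.sum_sub_distrib, Finset.sum_add_distrib, Finset.sum_sub_distrib]
  have he : ∑ c, (((Ec m n h₁ h₂ c).card : ℤ)) = (n : ℤ) := by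
    rw [← Nat.cast_sum, sum_Ec_card]
  have hv : ∑ c, (((Vc m n h₁ h₂ c).card : ℤ)) = 2 * (m : ℤ) := by
    rw [← Nat.cast_sum, sum_Vc_card]
    push_cast
    ring
  have h1 : ∑ _c : Quot (cAdj m n h₁ h₂), (1 : ℤ) =
      (Fintype.card (Quot (cAdj m n h₁ h₂)) : ℤ) := by
    rw [Finset.sum_const, Finset.card_univ]
    simp
  have hT : ∑ c, (if cyc m n h₁ h₂ c then (1 : ℤ) else 0) =
      ((Finset.univ.filter (fun c => cyc m n h₁ h₂ c)).card : ℤ) := by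
    rw [Finset.card_filter]
    push_cast
    apply Finset.sum_congr rfl
    intro c _
    split <;> simp
  rw [he, hv, h1, hT]

end CuckooAux

/-- the minimum number of keys that must be placed in the stash
equals `γ(G) − T(G)`, the cyclomatic number minus the number of cyclic components. -/
theorem minStash_eq_cyclomatic_sub_cyclicComponents
    (m n : ℕ) (h₁ h₂ : Fin n → Fin m) :
    (minStash m n h₁ h₂ : ℤ) =
      cyclomatic m n h₁ h₂ - numCyclicComponents m n h₁ h₂ := by
  rw [CuckooAux.minStash_eq, cyclomatic, CuckooAux.numCyclicComponents_eq]
  rw [show numComponents m n h₁ h₂ = Fintype.card (Quot (cAdj m n h₁ h₂)) from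
    Nat.card_eq_fintype_card]
  rw [CuckooAux.final_arith]
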